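/- Let m, n ≥ 5. If L' is a right ideal with quotient complexity m and L is a left ideal with quotient complexity n (over possibly different alphabets), then κ(L'·L) ≤ m + 2n. Moreover, for all m, n ≥ 5 there exist two-sided ideals L' and L, with alphabets satisfying Σ_{L'} \ Σ_L ≠ ∅ and Σ_L \ Σ_{L'} ≠ ∅, of quotient complexities m and n, such that κ(L'·L) = m + 2n. -/

import Mathlib

/-- The alphabet of a language: letters occurring in some word of `L`. -/
def alphabetOf {α : Type*} (L : Language α) : Set α :=
  {a | ∃ u v : List α, u ++ [a] ++ v ∈ L}

/-- The left quotient of `L` by a word `w`. -/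
def leftQuotient {α : Type*} (L : Language α) (w : List α) : Language α :=
  {x | w ++ x ∈ L}

/-- The set of left quotients of `L` by words over the alphabet of `L`. -/
def quotientSet {α : Type*} (L : Language α) : Set (Language α) :=
  {K | ∃ w : List α, (∀ a ∈ w, a ∈ alphabetOf L) ∧ K = leftQuotient L w}

/-- `L` is regular with quotient complexity `m`: the set of its left quotients
(by words over its own alphabet) is finite of cardinality exactly `m`. -/
def HasComplexity {α : Type*} (L : Language α) (m : ℕ) : Prop :=
  (quotientSet L).Finite ∧ (quotientSet L).ncard = m

/-- All words whose letters lie in `S`. -/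
def starOf {α : Type*} (S : Set α) : Language α :=
  {w | ∀ a ∈ w, a ∈ S}

/-- A nonempty language `L` is a right ideal if `L · Σ_L^* = L`. -/
def IsRightIdeal {α : Type*} (L : Language α) : Prop :=
  (∃ w, w ∈ L) ∧ L * starOf (alphabetOf L) = L

/-- A nonempty language `L` is a left ideal if `Σ_L^* · L = L`. -/
def IsLeftIdeal {α : Type*} (L : Language α) : Prop :=
  (∃ w, w ∈ L) ∧ starOf (alphabetOf L) * L = L

/-- A nonempty language `L` is a two-sided ideal if `Σ_L^* · L · Σ_L^* = L`. -/
def IsTwoSidedIdeal {α : Type*} (L : Language α) : Prop :=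
  (∃ w, w ∈ L) ∧ starOf (alphabetOf L) * L * starOf (alphabetOf L) = L

open Classical

section Lemmas
variable {α : Type*} {L L' : Language α}

lemma mem_alphabetOf_of_mem {w : List α} (hw : w ∈ L) {a : α} (ha : a ∈ w) :
    a ∈ alphabetOf L := by
  obtain ⟨s, t, rfl⟩ := List.append_of_mem ha
  exact ⟨s, t, by simpa using hw⟩

lemma leftQuotient_nil : leftQuotient L [] = L := by
  apply Language.ext; intro x; exact Iff.rfl

lemma mem_leftQuotient {w x : List α} : x ∈ leftQuotient L w ↔ w ++ x ∈ L := Iff.rfl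

lemma leftQuotient_append (u v : List α) :
    leftQuotient L (u ++ v) = leftQuotient (leftQuotient L u) v := by
  apply Language.ext; intro x
  simp only [mem_leftQuotient, List.append_assoc]

lemma mem_starOf {S : Set α} {w : List α} : w ∈ starOf S ↔ ∀ a ∈ w, a ∈ S := Iff.rfl

lemma nil_mem_starOf (S : Set α) : ([] : List α) ∈ starOf S := by simp [mem_starOf]

lemma leftQuotient_eq_zero_of_foreign {w : List α}
    (h : ∃ a ∈ w, a ∉ alphabetOf L) : leftQuotient L w = 0 := by
  apply Language.ext; intro x
  constructor
  · intro hx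
    obtain ⟨a, haw, han⟩ := h
    exact absurd (mem_alphabetOf_of_mem (mem_leftQuotient.1 hx) (List.mem_append.2 (Or.inl haw))) han
  · exact fun hx => absurd hx (Language.notMem_zero x)

lemma leftQuotient_subset_of_leftIdeal (hL : starOf (alphabetOf L) * L = L)
    {y v : List α} (hy : ∀ a ∈ y, a ∈ alphabetOf L) :
    leftQuotient L v ≤ leftQuotient L (y ++ v) := by
  intro x hx
  have : (y ++ (v ++ x)) ∈ starOf (alphabetOf L) * L :=
    Language.mem_mul.2 ⟨y, hy, v ++ x, hx, rfl⟩
  rw [hL] at this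
  change (y ++ v) ++ x ∈ L
  rw [List.append_assoc]
  exact this

lemma leftQuotient_of_mem_rightIdeal (hL : L' * starOf (alphabetOf L') = L')
    {u : List α} (hu : u ∈ L') :
    leftQuotient L' u = starOf (alphabetOf L') := by
  apply Language.ext; intro x
  constructor
  · intro hx
    intro a ha
    exact mem_alphabetOf_of_mem (L := L') hx (List.mem_append.2 (Or.inr ha))
  · intro hx
    have : u ++ x ∈ L' * starOf (alphabetOf L') :=
      Language.mem_mul.2 ⟨u, hu, x, hx, rfl⟩
    rw [hL] at this; exact this

lemma leftQuotient_starOf (S : Set α) (v : List α) :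
    leftQuotient (starOf S) v = if (∀ a ∈ v, a ∈ S) then starOf S else 0 := by
  split_ifs with h
  · apply Language.ext; intro x
    simp only [mem_leftQuotient, mem_starOf]
    constructor
    · intro hx a ha; exact hx a (List.mem_append.2 (Or.inr ha))
    · intro hx a ha
      rcases List.mem_append.1 ha with h' | h'
      · exact h a h'
      · exact hx a h'
  · apply Language.ext; intro x
    constructor
    · intro hx
      exact absurd (fun a ha => hx a (List.mem_append.2 (Or.inl ha))) h
    · exact fun hx => absurd hx (Language.notMem_zero x)

lemma leftQuotient_rightIdeal_split (hL : L' * starOf (alphabetOf L') = L')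
    {u : List α} (v : List α) (hu : u ∈ L') :
    leftQuotient L' (u ++ v)
      = if (∀ a ∈ v, a ∈ alphabetOf L') then starOf (alphabetOf L') else 0 := by
  rw [leftQuotient_append, leftQuotient_of_mem_rightIdeal hL hu, leftQuotient_starOf]

lemma mem_leftQuotient_mul {w x : List α} :
    x ∈ leftQuotient (L' * L) w ↔
      (∃ x1 x2, x = x1 ++ x2 ∧ x1 ∈ leftQuotient L' w ∧ x2 ∈ L) ∨
      (∃ u v, w = u ++ v ∧ u ∈ L' ∧ x ∈ leftQuotient L v) := by
  constructor
  · intro hx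
    rw [mem_leftQuotient, Language.mem_mul] at hx
    obtain ⟨y, hy, z, hz, hyz⟩ := hx
    rcases List.append_eq_append_iff.1 hyz.symm with ⟨a', ha1, ha2⟩ | ⟨c', hc1, hc2⟩
    · exact Or.inl ⟨a', z, ha2, by rw [mem_leftQuotient, ← ha1]; exact hy, hz⟩
    · exact Or.inr ⟨y, c', hc1, hy, by rw [mem_leftQuotient, ← hc2]; exact hz⟩
  · rintro (⟨x1, x2, rfl, h1, h2⟩ | ⟨u, v, rfl, hu, hv⟩)
    · rw [mem_leftQuotient, Language.mem_mul]
      exact ⟨w ++ x1, h1, x2, h2, by simp [List.append_assoc]⟩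
    · rw [mem_leftQuotient, Language.mem_mul]
      exact ⟨u, hu, v ++ x, hv, by simp [List.append_assoc]⟩

lemma mem_mul_iff {x : List α} :
    x ∈ L' * L ↔ ∃ x1 x2, x = x1 ++ x2 ∧ x1 ∈ L' ∧ x2 ∈ L := by
  rw [Language.mem_mul]
  constructor
  · rintro ⟨a, ha, b, hb, rfl⟩; exact ⟨a, b, rfl, ha, hb⟩
  · rintro ⟨a, b, rfl, ha, hb⟩; exact ⟨a, ha, b, hb, rfl⟩

end Lemmas

section Upper
variable {α : Type*} {L' L : Language α}

/-- classification of quotients of a product of a right ideal and a left ideal -/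
lemma prod_quotient_classification (hR : IsRightIdeal L') (hLid : IsLeftIdeal L) (w : List α) :
    leftQuotient (L' * L) w ∈
      ((fun K => K * L) '' ((quotientSet L' ∪ {0}) \ {K | [] ∈ K})) ∪
      ((fun K => starOf (alphabetOf L') * L + K) '' quotientSet L) ∪
      (quotientSet L) := by
  classical
  by_cases hpre : ∃ u v : List α, w = u ++ v ∧ u ∈ L'
  · -- some prefix of w lies in L'
    obtain ⟨u0, v0, hw0, hu0⟩ := hpre
    have hq' : leftQuotient L' w = starOf (alphabetOf L') ∨ leftQuotient L' w = 0 := by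
      rw [hw0, leftQuotient_rightIdeal_split hR.2 v0 hu0]
      split_ifs with h
      · exact Or.inl rfl
      · exact Or.inr rfl
    set C : Set ℕ := {k | w.take k ∈ L' ∧ ∀ a ∈ w.drop k, a ∈ alphabetOf L} with hC
    by_cases hCne : C.Nonempty
    · -- minimal such k
      set k0 := sInf C with hk0
      have hk0C : k0 ∈ C := Nat.sInf_mem hCne
      set v1 := w.drop k0 with hv1
      have hval : leftQuotient (L' * L) w = (leftQuotient L' w) * L + leftQuotient L v1 := by
        apply Language.ext; intro x
        rw [Language.mem_add]
        constructor
        · intro hx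
          rcases mem_leftQuotient_mul.1 hx with ⟨x1, x2, rfl, h1, h2⟩ | ⟨u, v, huv, hu, hv⟩
          · exact Or.inl (mem_mul_iff.2 ⟨x1, x2, rfl, h1, h2⟩)
          · right
            by_cases hvS : ∀ a ∈ v, a ∈ alphabetOf L
            · have hkC : u.length ∈ C := by
                constructor
                · rw [huv, List.take_left]; exact hu
                · rw [huv, List.drop_left]; exact hvS
              have hle : k0 ≤ u.length := Nat.sInf_le hkC
              have hvdrop : v = List.drop (u.length - k0) v1 := by
                rw [hv1, List.drop_drop, Nat.add_sub_cancel' hle, huv, List.drop_left]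
              have hsplit : List.take (u.length - k0) v1 ++ v = v1 := by
                rw [hvdrop]; exact List.take_append_drop _ _
              have hy : ∀ a ∈ List.take (u.length - k0) v1, a ∈ alphabetOf L := by
                intro a ha
                exact hk0C.2 a (List.mem_of_mem_take ha)
              have := leftQuotient_subset_of_leftIdeal hLid.2 hy (v := v) hv
              rwa [hsplit] at this
            · push_neg at hvS
              obtain ⟨a, hav, haA⟩ := hvS
              rw [leftQuotient_eq_zero_of_foreign ⟨a, hav, haA⟩] at hv
              exact absurd hv (Language.notMem_zero x)
        · rintro (hx | hx)
          · obtain ⟨x1, x2, rfl, h1, h2⟩ := mem_mul_iff.1 hx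
            exact mem_leftQuotient_mul.2 (Or.inl ⟨x1, x2, rfl, h1, h2⟩)
          · exact mem_leftQuotient_mul.2
              (Or.inr ⟨w.take k0, v1, (List.take_append_drop _ _).symm, hk0C.1, hx⟩)
      have hv1Q : leftQuotient L v1 ∈ quotientSet L := ⟨v1, hk0C.2, rfl⟩
      rcases hq' with h | h
      · rw [hval, h]
        exact Or.inl (Or.inr ⟨leftQuotient L v1, hv1Q, rfl⟩)
      · rw [hval, h, zero_mul, zero_add]
        exact Or.inr hv1Q
    · -- no decomposition with suffix over the alphabet of L
      have hval : leftQuotient (L' * L) w = (leftQuotient L' w) * L := by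
        apply Language.ext; intro x
        constructor
        · intro hx
          rcases mem_leftQuotient_mul.1 hx with ⟨x1, x2, rfl, h1, h2⟩ | ⟨u, v, huv, hu, hv⟩
          · exact mem_mul_iff.2 ⟨x1, x2, rfl, h1, h2⟩
          · exfalso
            by_cases hvS : ∀ a ∈ v, a ∈ alphabetOf L
            · exact hCne ⟨u.length, by rw [huv, List.take_left]; exact hu,
                by rw [huv, List.drop_left]; exact hvS⟩
            · push_neg at hvS
              obtain ⟨a, hav, haA⟩ := hvS
              rw [leftQuotient_eq_zero_of_foreign ⟨a, hav, haA⟩] at hv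
              exact absurd hv (Language.notMem_zero x)
        · intro hx
          obtain ⟨x1, x2, rfl, h1, h2⟩ := mem_mul_iff.1 hx
          exact mem_leftQuotient_mul.2 (Or.inl ⟨x1, x2, rfl, h1, h2⟩)
      rcases hq' with h | h
      · -- value is Σ₁*·L = Σ₁*·L + L
        have : leftQuotient (L' * L) w
            = starOf (alphabetOf L') * L + leftQuotient L [] := by
          rw [hval, h, leftQuotient_nil]
          apply Language.ext; intro x
          rw [Language.mem_add]
          constructor
          · exact Or.inl
          · rintro (hx | hx)
            · exact hx
            · exact mem_mul_iff.2 ⟨[], x, rfl, nil_mem_starOf _, hx⟩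
        rw [this]
        exact Or.inl (Or.inr ⟨leftQuotient L [], ⟨[], by simp, rfl⟩, rfl⟩)
      · rw [hval, h, zero_mul]
        refine Or.inl (Or.inl ⟨0, ⟨Or.inr rfl, ?_⟩, (zero_mul L)⟩)
        exact fun hmem => Language.notMem_zero [] hmem
  · -- no prefix of w lies in L'
    have hval : leftQuotient (L' * L) w = (leftQuotient L' w) * L := by
      apply Language.ext; intro x
      constructor
      · intro hx
        rcases mem_leftQuotient_mul.1 hx with ⟨x1, x2, rfl, h1, h2⟩ | ⟨u, v, huv, hu, hv⟩
        · exact mem_mul_iff.2 ⟨x1, x2, rfl, h1, h2⟩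
        · exact absurd ⟨u, v, huv, hu⟩ hpre
      · intro hx
        obtain ⟨x1, x2, rfl, h1, h2⟩ := mem_mul_iff.1 hx
        exact mem_leftQuotient_mul.2 (Or.inl ⟨x1, x2, rfl, h1, h2⟩)
    rw [hval]
    refine Or.inl (Or.inl ⟨leftQuotient L' w, ⟨?_, ?_⟩, rfl⟩)
    · by_cases hover : ∀ a ∈ w, a ∈ alphabetOf L'
      · exact Or.inl ⟨w, hover, rfl⟩
      · push_neg at hover
        obtain ⟨a, haw, haA⟩ := hover
        exact Or.inr (leftQuotient_eq_zero_of_foreign ⟨a, haw, haA⟩)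
    · intro hmem
      have h2 : ([] : List α) ∈ leftQuotient L' w := hmem
      rw [mem_leftQuotient, List.append_nil] at h2
      exact hpre ⟨w, [], (List.append_nil w).symm, h2⟩

theorem part1 {m n : ℕ} (hR : IsRightIdeal L') (hLid : IsLeftIdeal L)
    (hm : HasComplexity L' m) (hn : HasComplexity L n) :
    (quotientSet (L' * L)).Finite ∧ (quotientSet (L' * L)).ncard ≤ m + 2 * n := by
  classical
  set SA : Set (Language α) := (quotientSet L' ∪ {0}) \ {K | [] ∈ K} with hSA
  set A : Set (Language α) := (fun K => K * L) '' SA with hA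
  set B1 : Set (Language α) := (fun K => starOf (alphabetOf L') * L + K) '' quotientSet L
    with hB1
  set B2 : Set (Language α) := quotientSet L with hB2
  have hSAfin : SA.Finite := (hm.1.union (Set.finite_singleton 0)).diff
  have hAfin : A.Finite := hSAfin.image _
  have hB1fin : B1.Finite := hn.1.image _
  have hB2fin : B2.Finite := hn.1
  have hsub : quotientSet (L' * L) ⊆ A ∪ B1 ∪ B2 := by
    rintro K ⟨w, -, rfl⟩
    exact prod_quotient_classification hR hLid w
  have hfin : (quotientSet (L' * L)).Finite :=
    ((hAfin.union hB1fin).union hB2fin).subset hsub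
  refine ⟨hfin, ?_⟩
  -- cardinality of SA
  obtain ⟨x0, hx0⟩ := hR.1
  have he : leftQuotient L' x0 ∈ quotientSet L' :=
    ⟨x0, fun a ha => mem_alphabetOf_of_mem hx0 ha, rfl⟩
  have heps : [] ∈ leftQuotient L' x0 := by
    rw [mem_leftQuotient, List.append_nil]; exact hx0
  have hSAsub : SA ⊆ (quotientSet L' ∪ {0}) \ {leftQuotient L' x0} := by
    rintro K ⟨hK1, hK2⟩
    refine ⟨hK1, ?_⟩
    simp only [Set.mem_singleton_iff]
    rintro rfl
    exact hK2 heps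
  have hcard1 : ((quotientSet L' ∪ {0}) \ {leftQuotient L' x0}).ncard
      = (quotientSet L' ∪ {0}).ncard - 1 :=
    Set.ncard_diff_singleton_of_mem (s := quotientSet L' ∪ {0}) (Or.inl he)
  have hcard2 : (quotientSet L' ∪ {0}).ncard ≤ m + 1 := by
    calc (quotientSet L' ∪ {0}).ncard ≤ (quotientSet L').ncard + ({0} : Set (Language α)).ncard :=
          Set.ncard_union_le _ _
      _ = m + 1 := by rw [hm.2, Set.ncard_singleton]
  have hSAcard : SA.ncard ≤ m := by
    calc SA.ncard ≤ ((quotientSet L' ∪ {0}) \ {leftQuotient L' x0}).ncard :=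
          Set.ncard_le_ncard hSAsub (((hm.1.union (Set.finite_singleton 0))).diff)
      _ = (quotientSet L' ∪ {0}).ncard - 1 := hcard1
      _ ≤ (m + 1) - 1 := by omega
      _ = m := by omega
  have hAcard : A.ncard ≤ m := le_trans (Set.ncard_image_le hSAfin) hSAcard
  have hB1card : B1.ncard ≤ n := le_trans (Set.ncard_image_le hn.1) (le_of_eq hn.2)
  have hB2card : B2.ncard ≤ n := le_of_eq hn.2
  calc (quotientSet (L' * L)).ncard ≤ (A ∪ B1 ∪ B2).ncard :=
        Set.ncard_le_ncard hsub ((hAfin.union hB1fin).union hB2fin)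
    _ ≤ (A ∪ B1).ncard + B2.ncard := Set.ncard_union_le _ _
    _ ≤ A.ncard + B1.ncard + B2.ncard := by
        have := Set.ncard_union_le A B1; omega
    _ ≤ m + 2 * n := by omega

end Upper

section InfixLemmas
variable {α : Type*} {c : α}

lemma replicate_infix_replicate_iff {p k : ℕ} :
    List.replicate p c <:+: List.replicate k c ↔ p ≤ k := by
  constructor
  · intro h
    simpa using h.length_le
  · intro h
    exact ⟨[], List.replicate (k - p) c, by
      rw [List.nil_append, ← List.replicate_add, Nat.add_sub_cancel' h]⟩

lemma eq_replicate_of_prefix {l : List α} {k : ℕ} (h : l <+: List.replicate k c) :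
    l = List.replicate l.length c := by
  obtain ⟨n, hn, rfl⟩ := List.sublist_replicate_iff.1 h.sublist
  simp

lemma infix_append_iff {p : ℕ} {u v : List α} :
    List.replicate p c <:+: u ++ v ↔
      List.replicate p c <:+: u ∨ List.replicate p c <:+: v ∨
      ∃ t, 0 < t ∧ t < p ∧ List.replicate t c <:+ u ∧ List.replicate (p - t) c <+: v := by
  constructor
  · rintro ⟨s, t', h⟩
    -- h : (s ++ R) ++ t' = u ++ v
    rcases List.append_eq_append_iff.1 h with ⟨a', ha1, ha2⟩ | ⟨c', hc1, hc2⟩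
    · -- u = (s ++ R) ++ a'
      left
      exact ⟨s, a', by rw [ha1]⟩
    · -- s ++ R = u ++ c', v = c' ++ t'
      rcases List.append_eq_append_iff.1 hc1 with ⟨b, hb1, hb2⟩ | ⟨b, hb1, hb2⟩
      ·
        -- R = b ++ c'  (b prefix of R)
        have hb : b = List.replicate b.length c := eq_replicate_of_prefix ⟨c', hb2.symm⟩
        have hlen : b.length ≤ p := by
          have := congrArg List.length hb2
          simp at this; omega
        have hc' : c' = List.replicate (p - b.length) c := by
          have : c' = List.drop b.length (List.replicate p c) := by
            rw [hb2]
            exact List.drop_left.symm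
          rwa [List.drop_replicate] at this
        rcases Nat.eq_zero_or_pos b.length with hz | hpos
        · right; left
          rw [hz, Nat.sub_zero] at hc'
          exact ⟨[], t', by rw [List.nil_append, ← hc', ← hc2]⟩
        · rcases eq_or_lt_of_le hlen with hep | hlt
          · left
            have hbR : b = List.replicate p c := by rw [hb, hep]
            have : c' = [] := by rw [hc', hep]; simp
            refine ⟨s, [], ?_⟩
            rw [List.append_nil, ← hbR, hb1]
          · right; right
            exact ⟨b.length, hpos, hlt, ⟨s, by rw [← hb, ← hb1]⟩,
              ⟨t', by rw [← hc', ← hc2]⟩⟩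
      · -- s = u ++ b, c' = b ++ R
        right; left
        exact ⟨b, t', by rw [hc2, hb2, List.append_assoc]⟩
  · rintro (⟨s, t, h⟩ | ⟨s, t, h⟩ | ⟨t, _, htp, ⟨s, hs⟩, ⟨t', ht'⟩⟩)
    · exact ⟨s, t ++ v, by rw [← h]; simp [List.append_assoc]⟩
    · exact ⟨u ++ s, t, by rw [← h]; simp [List.append_assoc]⟩
    · refine ⟨s, t', ?_⟩
      have hR : List.replicate p c = List.replicate t c ++ List.replicate (p - t) c := by
        rw [← List.replicate_add, Nat.add_sub_cancel' (le_of_lt htp)]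
      rw [hR, ← hs, ← ht']
      simp only [List.append_assoc]

lemma infix_cons_iff' {p : ℕ} {d : α} {v : List α} (hd : d ≠ c) (hp : 0 < p) :
    List.replicate p c <:+: d :: v ↔ List.replicate p c <:+: v := by
  constructor
  · intro h
    rcases List.infix_cons_iff.1 h with h' | h'
    · exfalso
      obtain ⟨t, ht⟩ := h'
      rcases p with _ | p'
      · omega
      · rw [List.replicate_succ] at ht
        simp at ht
        exact hd ht.1.symm
    · exact h'
  · exact List.infix_cons

end InfixLemmas

section ChainIdeal
variable {α : Type*}

/-- words over `{a, c}` containing `c^p` as a factor -/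
def chainIdeal (a c : α) (p : ℕ) : Language α :=
  {w | (∀ d ∈ w, d = a ∨ d = c) ∧ List.replicate p c <:+: w}

variable {a c : α} {p : ℕ}

lemma mem_chainIdeal {w : List α} :
    w ∈ chainIdeal a c p ↔ (∀ d ∈ w, d = a ∨ d = c) ∧ List.replicate p c <:+: w := Iff.rfl

lemma replicate_mem_chainIdeal {k : ℕ} (hk : p ≤ k) :
    List.replicate k c ∈ chainIdeal a c p :=
  ⟨fun d hd => Or.inr (List.eq_of_mem_replicate hd),
    replicate_infix_replicate_iff.2 hk⟩

lemma alphabet_chainIdeal (hac : a ≠ c) (hp : 0 < p) :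
    alphabetOf (chainIdeal a c p) = {a, c} := by
  ext e
  constructor
  · rintro ⟨u, v, h⟩
    have := h.1 e (by simp)
    simpa using this
  · intro he
    simp only [Set.mem_insert_iff, Set.mem_singleton_iff] at he
    rcases he with rfl | rfl
    · exact ⟨[], List.replicate p c, by
        refine ⟨?_, ?_⟩
        · intro d hd
          rcases List.mem_append.1 hd with h1 | h1
          · rcases List.mem_append.1 h1 with h2 | h2
            · simp at h2
            · simp at h2; exact Or.inl h2
          · exact Or.inr (List.eq_of_mem_replicate h1)
        · exact ⟨[e], [], by simp⟩⟩
    · refine ⟨[], List.replicate (p - 1) e, ?_⟩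
      have : ([] : List α) ++ [e] ++ List.replicate (p - 1) e = List.replicate p e := by
        simp [← List.replicate_succ]
        congr 1
        omega
      rw [this]
      exact replicate_mem_chainIdeal le_rfl

lemma starOf_mul_chainIdeal :
    starOf ({a, c} : Set α) * chainIdeal a c p = chainIdeal a c p := by
  apply Language.ext; intro x
  constructor
  · intro hx
    obtain ⟨y, z, rfl, hy, hz⟩ := mem_mul_iff.1 hx
    refine ⟨?_, hz.2.trans ⟨y, [], by simp⟩⟩
    intro d hd
    rcases List.mem_append.1 hd with h | h
    · simpa using hy d h
    · exact hz.1 d h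
  · intro hx
    exact mem_mul_iff.2 ⟨[], x, rfl, nil_mem_starOf _, hx⟩

lemma chainIdeal_mul_starOf :
    chainIdeal a c p * starOf ({a, c} : Set α) = chainIdeal a c p := by
  apply Language.ext; intro x
  constructor
  · intro hx
    obtain ⟨y, z, rfl, hy, hz⟩ := mem_mul_iff.1 hx
    refine ⟨?_, hy.2.trans ⟨[], z, by simp⟩⟩
    intro d hd
    rcases List.mem_append.1 hd with h | h
    · exact hy.1 d h
    · simpa using hz d h
  · intro hx
    exact mem_mul_iff.2 ⟨x, [], by simp, hx, nil_mem_starOf _⟩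

lemma chainIdeal_twoSided (hac : a ≠ c) (hp : 0 < p) :
    IsTwoSidedIdeal (chainIdeal a c p) := by
  refine ⟨⟨List.replicate p c, replicate_mem_chainIdeal le_rfl⟩, ?_⟩
  rw [alphabet_chainIdeal hac hp, starOf_mul_chainIdeal, chainIdeal_mul_starOf]

lemma chainIdeal_rightIdeal (hac : a ≠ c) (hp : 0 < p) :
    IsRightIdeal (chainIdeal a c p) := by
  refine ⟨⟨List.replicate p c, replicate_mem_chainIdeal le_rfl⟩, ?_⟩
  rw [alphabet_chainIdeal hac hp, chainIdeal_mul_starOf]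

lemma chainIdeal_leftIdeal (hac : a ≠ c) (hp : 0 < p) :
    IsLeftIdeal (chainIdeal a c p) := by
  refine ⟨⟨List.replicate p c, replicate_mem_chainIdeal le_rfl⟩, ?_⟩
  rw [alphabet_chainIdeal hac hp, starOf_mul_chainIdeal]

end ChainIdeal

section ChainQuotients
variable {α : Type*} {a c : α} {p : ℕ}

lemma allc_mem_Qc {s l : ℕ} :
    List.replicate l c ∈ leftQuotient (chainIdeal a c p) (List.replicate s c) ↔ p ≤ s + l := by
  rw [mem_leftQuotient, ← List.replicate_add, mem_chainIdeal]
  constructor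
  · intro h
    exact replicate_infix_replicate_iff.1 h.2
  · intro h
    exact ⟨fun d hd => Or.inr (List.eq_of_mem_replicate hd), replicate_infix_replicate_iff.2 h⟩

lemma Qc_final (hac : a ≠ c) (hp : 0 < p) {s : ℕ} (hs : p ≤ s) :
    leftQuotient (chainIdeal a c p) (List.replicate s c) = starOf ({a, c} : Set α) := by
  rw [← alphabet_chainIdeal hac hp]
  exact leftQuotient_of_mem_rightIdeal (chainIdeal_rightIdeal hac hp).2
    (replicate_mem_chainIdeal hs)

lemma Qc_injOn :
    Set.InjOn (fun s => leftQuotient (chainIdeal a c p) (List.replicate s c)) (Set.Iic p) := by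
  have key : ∀ s s', s ∈ Set.Iic p → s' ∈ Set.Iic p → s < s' →
      leftQuotient (chainIdeal a c p) (List.replicate s c) ≠
      leftQuotient (chainIdeal a c p) (List.replicate s' c) := by
    intro s s' hs hs' hlt heq
    have h1 : List.replicate (p - s') c ∈
        leftQuotient (chainIdeal a c p) (List.replicate s' c) := by
      rw [allc_mem_Qc]; simp at hs'; omega
    rw [← heq, allc_mem_Qc] at h1
    simp at hs hs'
    omega
  intro s hs s' hs' heq
  rcases lt_trichotomy s s' with h | h | h
  · exact absurd heq (key s s' hs hs' h)
  · exact h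
  · exact absurd heq.symm (key s' s hs' hs h)

lemma quotient_step_a (hac : a ≠ c) (hp : 0 < p) {s : ℕ} (hs : s < p) :
    leftQuotient (chainIdeal a c p) (List.replicate s c ++ [a]) = chainIdeal a c p := by
  apply Language.ext; intro x
  rw [mem_leftQuotient, mem_chainIdeal, mem_chainIdeal]
  constructor
  · rintro ⟨hlet, hinf⟩
    refine ⟨fun d hd => hlet d (by simp [hd]), ?_⟩
    rw [List.append_assoc] at hinf
    rcases infix_append_iff.1 hinf with h | h | ⟨t, ht0, htp, _, hpre⟩
    · exfalso
      have := replicate_infix_replicate_iff.1 h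
      omega
    · rw [List.singleton_append] at h
      exact (infix_cons_iff' (Ne.symm (Ne.symm hac)) hp).1 h
    · exfalso
      obtain ⟨t', ht'⟩ := hpre
      have hpt : 0 < p - t := by omega
      rw [List.singleton_append] at ht'
      obtain ⟨k, hk⟩ : ∃ k, p - t = k + 1 := ⟨p - t - 1, by omega⟩
      rw [hk, List.replicate_succ] at ht'
      simp at ht'
      exact hac ht'.1.symm
  · rintro ⟨hlet, hinf⟩
    constructor
    · intro d hd
      rcases List.mem_append.1 hd with h | h
      · rcases List.mem_append.1 h with h1 | h1
        · exact Or.inr (List.eq_of_mem_replicate h1)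
        · simp at h1; exact Or.inl h1
      · exact hlet d h
    · obtain ⟨u, v, huv⟩ := hinf
      exact ⟨List.replicate s c ++ [a] ++ u, v, by rw [← huv]; simp [List.append_assoc]⟩

lemma quotient_classification (hac : a ≠ c) (hp : 0 < p) {w : List α}
    (hw : ∀ d ∈ w, d = a ∨ d = c) :
    ∃ s ≤ p, leftQuotient (chainIdeal a c p) w
      = leftQuotient (chainIdeal a c p) (List.replicate s c) := by
  induction w using List.reverseRecOn with
  | nil => exact ⟨0, Nat.zero_le p, rfl⟩
  | append_singleton w d ih =>
    have hww : ∀ e ∈ w, e = a ∨ e = c := fun e he => hw e (by simp [he])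
    have hd : d = a ∨ d = c := hw d (by simp)
    obtain ⟨s, hs, hq⟩ := ih hww
    rw [leftQuotient_append, hq, ← leftQuotient_append]
    rcases hd with hda | hdc
    · -- letter a
      subst hda
      rcases eq_or_lt_of_le hs with heq | hlt
      · -- s = p : stay in final state
        refine ⟨p, le_rfl, ?_⟩
        rw [heq]
        have hmem : List.replicate p c ++ [d] ∈ chainIdeal d c p := by
          refine ⟨?_, ⟨[], [d], by simp⟩⟩
          intro e he
          rcases List.mem_append.1 he with h | h
          · exact Or.inr (List.eq_of_mem_replicate h)
          · simp at h; exact Or.inl h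
        rw [leftQuotient_of_mem_rightIdeal (chainIdeal_rightIdeal hac hp).2 hmem,
          leftQuotient_of_mem_rightIdeal (chainIdeal_rightIdeal hac hp).2
            (replicate_mem_chainIdeal le_rfl)]
      · refine ⟨0, Nat.zero_le p, ?_⟩
        rw [quotient_step_a hac hp hlt]
        exact leftQuotient_nil.symm
    · -- letter c
      subst hdc
      have hstep : List.replicate s d ++ [d] = List.replicate (s + 1) d :=
        List.replicate_succ'.symm
      rcases eq_or_lt_of_le hs with heq | hlt
      · subst heq
        refine ⟨s, le_rfl, ?_⟩
        rw [hstep, Qc_final hac hp (by omega), Qc_final hac hp le_rfl]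
      · exact ⟨s + 1, by omega, by rw [hstep]⟩

lemma chainIdeal_complexity (hac : a ≠ c) (hp : 0 < p) :
    HasComplexity (chainIdeal a c p) (p + 1) := by
  have hQS : quotientSet (chainIdeal a c p)
      = (fun s => leftQuotient (chainIdeal a c p) (List.replicate s c)) '' (Set.Iic p) := by
    ext K
    constructor
    · rintro ⟨w, hw, rfl⟩
      have hw' : ∀ d ∈ w, d = a ∨ d = c := by
        intro d hd
        have := hw d hd
        rw [alphabet_chainIdeal hac hp] at this
        simpa using this
      obtain ⟨s, hs, hq⟩ := quotient_classification hac hp hw'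
      exact ⟨s, hs, hq.symm⟩
    · rintro ⟨s, hs, rfl⟩
      refine ⟨List.replicate s c, ?_, rfl⟩
      intro d hd
      rw [alphabet_chainIdeal hac hp]
      simp [List.eq_of_mem_replicate hd]
  constructor
  · rw [hQS]
    exact (Set.finite_Iic p).image _
  · rw [hQS, Set.ncard_image_of_injOn Qc_injOn, ← Finset.coe_Iic, Set.ncard_coe_finset,
      Nat.card_Iic]

end ChainQuotients

section ProductWitness
variable {α : Type*} {a b c : α} {p q : ℕ}

lemma eq_replicate_of_suffix {l : List α} {k : ℕ} {e : α} (h : l <:+ List.replicate k e) :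
    l = List.replicate l.length e := by
  obtain ⟨n, hn, rfl⟩ := List.sublist_replicate_iff.1 h.sublist
  simp

lemma allc_mem_chainIdeal_iff {l : ℕ} : List.replicate l c ∈ chainIdeal a c p ↔ p ≤ l := by
  constructor
  · intro h
    have := h.2.length_le
    simpa using this
  · exact replicate_mem_chainIdeal

lemma length_ge_of_mem_chainIdeal {u : List α} (hu : u ∈ chainIdeal a c p) : p ≤ u.length := by
  have := hu.2.length_le
  simpa using this

lemma b_not_mem_of_mem_chainIdeal (hab : a ≠ b) (hbc : b ≠ c) {u : List α}
    (hu : u ∈ chainIdeal a c p) : b ∉ u := by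
  intro hb
  rcases hu.1 b hb with h | h
  · exact hab h.symm
  · exact hbc h

/-- quotient of the product by [b] is empty -/
lemma prodQ_b (hab : a ≠ b) (hbc : b ≠ c) (hp : 0 < p) :
    leftQuotient (chainIdeal a c p * chainIdeal b c q) [b] = 0 := by
  apply Language.ext; intro x
  constructor
  · intro hx
    exfalso
    rcases mem_leftQuotient_mul.1 hx with ⟨x1, x2, rfl, h1, h2⟩ | ⟨u, v, huv, hu, hv⟩
    · have : [b] ++ x1 ∈ chainIdeal a c p := h1
      exact b_not_mem_of_mem_chainIdeal hab hbc this (by simp)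
    · rcases u with _ | ⟨e, u'⟩
      · have := length_ge_of_mem_chainIdeal hu
        simp at this; omega
      · have he : e = b := by
          have := congrArg (fun l => l.head?) huv
          simpa using this.symm
        subst he
        exact b_not_mem_of_mem_chainIdeal hab hbc hu (by simp)
  · intro hx
    exact absurd hx (Language.notMem_zero x)

/-- quotient of the product by c^s, s < p -/
lemma prodQ_cs (hs : s < p) :
    leftQuotient (chainIdeal a c p * chainIdeal b c q) (List.replicate s c)
      = leftQuotient (chainIdeal a c p) (List.replicate s c) * chainIdeal b c q := by
  apply Language.ext; intro x
  constructor
  · intro hx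
    rcases mem_leftQuotient_mul.1 hx with ⟨x1, x2, rfl, h1, h2⟩ | ⟨u, v, huv, hu, hv⟩
    · exact mem_mul_iff.2 ⟨x1, x2, rfl, h1, h2⟩
    · exfalso
      have hpre : u <+: List.replicate s c := ⟨v, huv.symm⟩
      have hu' := eq_replicate_of_prefix hpre
      have hlen : u.length ≤ s := by
        have := hpre.length_le
        simpa using this
      have hge : p ≤ u.length := length_ge_of_mem_chainIdeal hu
      omega
  · intro hx
    obtain ⟨x1, x2, rfl, h1, h2⟩ := mem_mul_iff.1 hx
    exact mem_leftQuotient_mul.2 (Or.inl ⟨x1, x2, rfl, h1, h2⟩)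

/-- quotient of the product by c^(p+j) -/
lemma prodQ_final (hac : a ≠ c) (hbc : b ≠ c) (hp : 0 < p) (hq : 0 < q) (j : ℕ) :
    leftQuotient (chainIdeal a c p * chainIdeal b c q) (List.replicate (p + j) c)
      = starOf ({a, c} : Set α) * chainIdeal b c q
        + leftQuotient (chainIdeal b c q) (List.replicate j c) := by
  apply Language.ext; intro x
  rw [Language.mem_add]
  constructor
  · intro hx
    rcases mem_leftQuotient_mul.1 hx with ⟨x1, x2, rfl, h1, h2⟩ | ⟨u, v, huv, hu, hv⟩
    · left
      rw [Qc_final hac hp (Nat.le_add_right p j)] at h1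
      exact mem_mul_iff.2 ⟨x1, x2, rfl, h1, h2⟩
    · right
      have hpre : u <+: List.replicate (p + j) c := ⟨v, huv.symm⟩
      have hu' := eq_replicate_of_prefix hpre
      have hulen : u.length ≤ p + j := by have := hpre.length_le; simpa using this
      have hge : p ≤ u.length := length_ge_of_mem_chainIdeal hu
      have hveq : v = List.replicate (p + j - u.length) c := by
        have : v = List.drop u.length (List.replicate (p + j) c) := by
          rw [huv]
          exact List.drop_left.symm
        rwa [List.drop_replicate] at this
      rw [hveq] at hv
      have hsub := leftQuotient_subset_of_leftIdeal (chainIdeal_leftIdeal hbc hq).2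
        (y := List.replicate (j - (p + j - u.length)) c)
        (v := List.replicate (p + j - u.length) c) ?_
      · have := hsub hv
        rwa [← List.replicate_add,
          show j - (p + j - u.length) + (p + j - u.length) = j by omega] at this
      · intro d hd
        rw [alphabet_chainIdeal hbc hq]
        simp [List.eq_of_mem_replicate hd]
  · rintro (hx | hx)
    · obtain ⟨x1, x2, rfl, h1, h2⟩ := mem_mul_iff.1 hx
      refine mem_leftQuotient_mul.2 (Or.inl ⟨x1, x2, rfl, ?_, h2⟩)
      rw [Qc_final hac hp (Nat.le_add_right p j)]
      exact h1
    · exact mem_leftQuotient_mul.2 (Or.inr ⟨List.replicate p c, List.replicate j c,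
        (List.replicate_add p j c), replicate_mem_chainIdeal le_rfl, hx⟩)

/-- quotient of the product by c^p b c^j -/
lemma prodQ_bcs (hab : a ≠ b) (hac : a ≠ c) (hbc : b ≠ c) (hp : 0 < p) (hq : 0 < q) (j : ℕ) :
    leftQuotient (chainIdeal a c p * chainIdeal b c q)
        (List.replicate p c ++ [b] ++ List.replicate j c)
      = leftQuotient (chainIdeal b c q) (List.replicate j c) := by
  apply Language.ext; intro x
  constructor
  · intro hx
    rcases mem_leftQuotient_mul.1 hx with ⟨x1, x2, rfl, h1, h2⟩ | ⟨u, v, huv, hu, hv⟩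
    · exfalso
      have : (List.replicate p c ++ [b] ++ List.replicate j c) ++ x1 ∈ chainIdeal a c p := h1
      exact b_not_mem_of_mem_chainIdeal hab hbc this (by simp)
    · -- u must be exactly c^p and v = [b] ++ c^j
      have hbu : b ∉ u := b_not_mem_of_mem_chainIdeal hab hbc hu
      have hueq : u = List.replicate p c ∧ v = [b] ++ List.replicate j c := by
        rcases List.append_eq_append_iff.1 huv with ⟨a', ha1, ha2⟩ | ⟨c', hc1, hc2⟩
        · -- u = (c^p ++ [b]) ++ a' : contains b
          exact absurd (by rw [ha1]; simp) hbu
        · -- c^p ++ [b] = u ++ c', v = c' ++ c^j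
          rcases List.append_eq_append_iff.1 hc1 with ⟨e, he1, he2⟩ | ⟨e, he1, he2⟩
          · -- u = c^p ++ e, [b] = e ++ c'
            rcases e with _ | ⟨f, e'⟩
            · rw [List.nil_append] at he2
              rw [List.append_nil] at he1
              exact ⟨he1, by rw [hc2, ← he2]⟩
            · have hf : f = b := by
                have := congrArg (fun l => l.head?) he2
                simpa using this.symm
              subst hf
              exact absurd (by rw [he1]; simp) hbu
          · -- c^p = u ++ e, c' = e ++ [b]
            have hpre : u <+: List.replicate p c := ⟨e, he1.symm⟩
            have hu' := eq_replicate_of_prefix hpre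
            have hlen : u.length ≤ p := by have := hpre.length_le; simpa using this
            have hge : p ≤ u.length := length_ge_of_mem_chainIdeal hu
            have hul : u.length = p := le_antisymm hlen hge
            have hue : u = List.replicate p c := by rw [hu', hul]
            have he0 : e = [] := by
              have hl := congrArg List.length he1
              simp [hul] at hl
              first
              | exact hl
              | exact List.eq_nil_of_length_eq_zero hl
            subst he0
            simp at he2
            exact ⟨hue, by rw [hc2, he2]⟩
      obtain ⟨hueq, hveq⟩ := hueq
      rw [hveq] at hv
      -- hv : x ∈ leftQuotient L2 ([b] ++ c^j)
      rw [mem_leftQuotient] at hv ⊢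
      rw [mem_chainIdeal] at hv ⊢
      constructor
      · intro d hd
        exact hv.1 d (by simp at hd ⊢; tauto)
      · have hinf := hv.2
        rw [List.append_assoc, List.singleton_append] at hinf
        exact (infix_cons_iff' hbc hq).1 hinf
  · intro hx
    refine mem_leftQuotient_mul.2 (Or.inr ⟨List.replicate p c, [b] ++ List.replicate j c,
      by simp [List.append_assoc], replicate_mem_chainIdeal le_rfl, ?_⟩)
    rw [mem_leftQuotient] at hx ⊢
    rw [mem_chainIdeal] at hx ⊢
    constructor
    · intro d hd
      simp at hd
      rcases hd with rfl | hd | hd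
      · exact Or.inl rfl
      · exact Or.inr hd.2
      · exact hx.1 d (by simp [hd])
    · rw [List.append_assoc, List.singleton_append]
      exact List.infix_cons hx.2

end ProductWitness

section Distinct
variable {α : Type*} {a b c : α} {p q : ℕ}

/-- the `A`-family of quotients of the product -/
def Afam (a b c : α) (p q s : ℕ) : Language α :=
  leftQuotient (chainIdeal a c p) (List.replicate s c) * chainIdeal b c q

/-- the `B1`-family -/
def B1fam (a b c : α) (q j : ℕ) : Language α :=
  starOf ({a, c} : Set α) * chainIdeal b c q
    + leftQuotient (chainIdeal b c q) (List.replicate j c)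

/-- the `B2`-family -/
def B2fam (b c : α) (q j : ℕ) : Language α :=
  leftQuotient (chainIdeal b c q) (List.replicate j c)

lemma allc_mem_Afam {s l : ℕ} :
    List.replicate l c ∈ Afam a b c p q s ↔ ∃ i jj, i + jj = l ∧ p ≤ s + i ∧ q ≤ jj := by
  constructor
  · intro h
    obtain ⟨x1, x2, hx, h1, h2⟩ := mem_mul_iff.1 h
    have hx1 : x1 = List.replicate x1.length c := eq_replicate_of_prefix ⟨x2, hx.symm⟩
    have hx2 : x2 = List.replicate x2.length c := eq_replicate_of_suffix ⟨x1, hx.symm⟩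
    refine ⟨x1.length, x2.length, ?_, ?_, ?_⟩
    · have := congrArg List.length hx
      simp at this
      omega
    · rw [hx1] at h1
      exact allc_mem_Qc.1 h1
    · rw [hx2] at h2
      exact allc_mem_chainIdeal_iff.1 h2
  · rintro ⟨i, jj, rfl, h1, h2⟩
    exact mem_mul_iff.2 ⟨List.replicate i c, List.replicate jj c,
      (List.replicate_add i jj c), allc_mem_Qc.2 h1, replicate_mem_chainIdeal h2⟩

lemma allc_mem_starMul {l : ℕ} :
    List.replicate l c ∈ starOf ({a, c} : Set α) * chainIdeal b c q ↔ q ≤ l := by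
  constructor
  · intro h
    obtain ⟨x1, x2, hx, h1, h2⟩ := mem_mul_iff.1 h
    have hx2 : x2 = List.replicate x2.length c := eq_replicate_of_suffix ⟨x1, hx.symm⟩
    rw [hx2] at h2
    have hq2 := allc_mem_chainIdeal_iff.1 h2
    have := congrArg List.length hx
    simp at this
    omega
  · intro h
    exact mem_mul_iff.2 ⟨[], List.replicate l c, by simp, nil_mem_starOf _,
      replicate_mem_chainIdeal h⟩

lemma a_not_mem_quotL2 (hab : a ≠ b) (hac : a ≠ c) {j : ℕ} {x : List α}
    (hx : x ∈ leftQuotient (chainIdeal b c q) (List.replicate j c)) : a ∉ x := by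
  intro ha
  rcases (mem_leftQuotient.1 hx).1 a (by simp [ha]) with h | h
  · exact hab h
  · exact hac h

lemma bhead_not_mem_Afam (hab : a ≠ b) (hbc : b ≠ c) {s : ℕ} (hs : s < p) (t : List α) :
    [b] ++ t ∉ Afam a b c p q s := by
  intro h
  obtain ⟨x1, x2, hx, h1, h2⟩ := mem_mul_iff.1 h
  rcases x1 with _ | ⟨e, x1'⟩
  · have : (List.replicate 0 c : List α) ∈
        leftQuotient (chainIdeal a c p) (List.replicate s c) := h1
    have := allc_mem_Qc.1 this
    omega
  · have he : e = b := by
      have := congrArg (fun l => l.head?) hx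
      exact (by simpa using this : b = e).symm
    subst he
    have : e :: x1' ∈ leftQuotient (chainIdeal a c p) (List.replicate s c) := h1
    exact b_not_mem_of_mem_chainIdeal hab hbc (mem_leftQuotient.1 this) (by simp)

lemma Afam_inj {s s' : ℕ} (hss : s < s') (hs' : s' < p) (hq : 0 < q) :
    Afam a b c p q s ≠ Afam a b c p q s' := by
  intro heq
  have hmem : List.replicate ((p - s') + q) c ∈ Afam a b c p q s' :=
    allc_mem_Afam.2 ⟨p - s', q, rfl, by omega, le_rfl⟩
  rw [← heq] at hmem
  obtain ⟨i, jj, hsum, h1, h2⟩ := allc_mem_Afam.1 hmem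
  omega

lemma Afam_ne_zero {s : ℕ} (hs : s < p) : Afam a b c p q s ≠ 0 := by
  intro heq
  have hmem : List.replicate ((p - s) + q) c ∈ Afam a b c p q s :=
    allc_mem_Afam.2 ⟨p - s, q, rfl, by omega, le_rfl⟩
  rw [heq] at hmem
  exact Language.notMem_zero _ hmem

lemma B1fam_ne_zero {j : ℕ} : B1fam a b c q j ≠ 0 := by
  intro heq
  have hmem : List.replicate q c ∈ B1fam a b c q j :=
    (Language.mem_add _ _ _).2 (Or.inl (allc_mem_starMul.2 le_rfl))
  rw [heq] at hmem
  exact Language.notMem_zero _ hmem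

lemma B2fam_ne_zero {j : ℕ} (hj : j ≤ q) : B2fam b c q j ≠ 0 := by
  intro heq
  have hmem : List.replicate (q - j) c ∈ B2fam b c q j := allc_mem_Qc.2 (by omega)
  rw [heq] at hmem
  exact Language.notMem_zero _ hmem

lemma Afam_ne_B1fam (hab : a ≠ b) (hbc : b ≠ c) {s j : ℕ} (hs : s < p) :
    Afam a b c p q s ≠ B1fam a b c q j := by
  intro heq
  have hmem : [b] ++ List.replicate q c ∈ B1fam a b c q j := by
    refine (Language.mem_add _ _ _).2 (Or.inl (mem_mul_iff.2 ⟨[], [b] ++ List.replicate q c, by simp,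
      nil_mem_starOf _, ?_⟩))
    refine ⟨?_, ⟨[b], [], by simp⟩⟩
    intro d hd
    rcases List.mem_append.1 hd with h | h
    · simp at h; exact Or.inl h
    · exact Or.inr (List.eq_of_mem_replicate h)
  rw [← heq] at hmem
  exact bhead_not_mem_Afam hab hbc hs _ hmem

lemma Afam_ne_B2fam (hab : a ≠ b) (hac : a ≠ c) {s j : ℕ} (hs : s < p) :
    Afam a b c p q s ≠ B2fam b c q j := by
  intro heq
  have hmem : List.replicate (p - s) c ++ [a] ++ List.replicate q c ∈ Afam a b c p q s := by
    refine mem_mul_iff.2 ⟨List.replicate (p - s) c ++ [a], List.replicate q c,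
      by simp [List.append_assoc], ?_, replicate_mem_chainIdeal le_rfl⟩
    rw [mem_leftQuotient, ← List.append_assoc, ← List.replicate_add,
      show s + (p - s) = p by omega]
    refine ⟨?_, ⟨[], [a], by simp⟩⟩
    intro d hd
    rcases List.mem_append.1 hd with h | h
    · exact Or.inr (List.eq_of_mem_replicate h)
    · simp at h; exact Or.inl h
  rw [heq] at hmem
  exact a_not_mem_quotL2 hab hac hmem (by simp)

lemma B1fam_inj (hq : 0 < q) {j j' : ℕ} (hjj : j < j') (hj' : j' ≤ q) :
    B1fam a b c q j ≠ B1fam a b c q j' := by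
  intro heq
  have hmem : List.replicate (q - j') c ∈ B1fam a b c q j' :=
    (Language.mem_add _ _ _).2 (Or.inr (allc_mem_Qc.2 (by omega)))
  rw [← heq] at hmem
  rcases (Language.mem_add _ _ _).1 hmem with h | h
  · have := allc_mem_starMul.1 h
    omega
  · have := allc_mem_Qc.1 h
    omega

lemma B2fam_inj {j j' : ℕ} (hjj : j < j') (hj' : j' ≤ q) :
    B2fam b c q j ≠ B2fam b c q j' := by
  intro heq
  have hmem : List.replicate (q - j') c ∈ B2fam b c q j' := allc_mem_Qc.2 (by omega)
  rw [← heq] at hmem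
  have := allc_mem_Qc.1 hmem
  omega

lemma B1fam_ne_B2fam (hab : a ≠ b) (hac : a ≠ c) {j j' : ℕ} :
    B1fam a b c q j ≠ B2fam b c q j' := by
  intro heq
  have hmem : [a] ++ List.replicate q c ∈ B1fam a b c q j := by
    refine (Language.mem_add _ _ _).2 (Or.inl (mem_mul_iff.2 ⟨[a], List.replicate q c, rfl, ?_,
      replicate_mem_chainIdeal le_rfl⟩))
    intro d hd
    simp at hd
    simp [hd]
  rw [heq] at hmem
  exact a_not_mem_quotL2 hab hac hmem (by simp)

end Distinct

section Assembly
variable {α : Type*} {a b c : α} {p q : ℕ}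

lemma b_mem_alphabet_prod (hbc : b ≠ c) (hq : 0 < q) :
    b ∈ alphabetOf (chainIdeal a c p * chainIdeal b c q) := by
  refine ⟨List.replicate p c, List.replicate q c, ?_⟩
  refine mem_mul_iff.2 ⟨List.replicate p c, [b] ++ List.replicate q c,
    by simp [List.append_assoc], replicate_mem_chainIdeal le_rfl, ?_⟩
  refine ⟨?_, ⟨[b], [], by simp⟩⟩
  intro d hd
  rcases List.mem_append.1 hd with h | h
  · simp at h; exact Or.inl h
  · exact Or.inr (List.eq_of_mem_replicate h)

lemma c_mem_alphabet_prod (hp : 0 < p) :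
    c ∈ alphabetOf (chainIdeal a c p * chainIdeal b c q) := by
  refine ⟨[], List.replicate (p - 1) c ++ List.replicate q c, ?_⟩
  have heq : ([] : List α) ++ [c] ++ (List.replicate (p - 1) c ++ List.replicate q c)
      = List.replicate p c ++ List.replicate q c := by
    rw [List.nil_append, ← List.append_assoc]
    congr 1
    rw [List.singleton_append, ← List.replicate_succ]
    congr 1
    omega
  rw [heq]
  exact mem_mul_iff.2 ⟨List.replicate p c, List.replicate q c, rfl,
    replicate_mem_chainIdeal le_rfl, replicate_mem_chainIdeal le_rfl⟩

theorem witness_product_complexity (hab : a ≠ b) (hac : a ≠ c) (hbc : b ≠ c)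
    (hp : 0 < p) (hq : 0 < q) :
    HasComplexity (chainIdeal a c p * chainIdeal b c q) ((p + 1) + 2 * (q + 1)) := by
  obtain ⟨hfin, hle⟩ := part1 (chainIdeal_rightIdeal hac hp) (chainIdeal_leftIdeal hbc hq)
    (chainIdeal_complexity hac hp) (chainIdeal_complexity hbc hq)
  refine ⟨hfin, le_antisymm hle ?_⟩
  -- build the explicit family
  set EA : Set (Language α) := insert 0 ((fun s => Afam a b c p q s) '' Set.Iio p) with hEA
  set EB1 : Set (Language α) := (fun j => B1fam a b c q j) '' Set.Iic q with hEB1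
  set EB2 : Set (Language α) := (fun j => B2fam b c q j) '' Set.Iic q with hEB2
  have hbA := b_mem_alphabet_prod (a := a) (p := p) hbc hq
  have hcA := c_mem_alphabet_prod (a := a) (b := b) (c := c) (q := q) hp
  have hEsub : EA ∪ (EB1 ∪ EB2) ⊆ quotientSet (chainIdeal a c p * chainIdeal b c q) := by
    rintro K (hK | (hK | hK))
    · rcases hK with rfl | ⟨s, hs, rfl⟩
      · exact ⟨[b], by simpa using hbA, (prodQ_b hab hbc hp).symm⟩
      · exact ⟨List.replicate s c,
          fun d hd => by rw [List.eq_of_mem_replicate hd]; exact hcA,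
          (prodQ_cs hs).symm⟩
    · obtain ⟨j, hj, rfl⟩ := hK
      exact ⟨List.replicate (p + j) c,
        fun d hd => by rw [List.eq_of_mem_replicate hd]; exact hcA,
        (prodQ_final hac hbc hp hq j).symm⟩
    · obtain ⟨j, hj, rfl⟩ := hK
      refine ⟨List.replicate p c ++ [b] ++ List.replicate j c, ?_,
        (prodQ_bcs hab hac hbc hp hq j).symm⟩
      intro d hd
      rcases List.mem_append.1 hd with h | h
      · rcases List.mem_append.1 h with h1 | h1
        · rw [List.eq_of_mem_replicate h1]; exact hcA
        · simp at h1; rw [h1]; exact hbA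
      · rw [List.eq_of_mem_replicate h]; exact hcA
  -- cardinalities
  have hAinj : Set.InjOn (fun s => Afam a b c p q s) (Set.Iio p) := by
    intro s hs s' hs' heq
    simp only [Set.mem_Iio] at hs hs'
    rcases lt_trichotomy s s' with h | h | h
    · exact absurd heq (Afam_inj h hs' hq)
    · exact h
    · exact absurd heq.symm (Afam_inj h hs hq)
  have hB1inj : Set.InjOn (fun j => B1fam a b c q j) (Set.Iic q) := by
    intro j hj j' hj' heq
    simp only [Set.mem_Iic] at hj hj'
    rcases lt_trichotomy j j' with h | h | h
    · exact absurd heq (B1fam_inj hq h hj')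
    · exact h
    · exact absurd heq.symm (B1fam_inj hq h hj)
  have hB2inj : Set.InjOn (fun j => B2fam b c q j) (Set.Iic q) := by
    intro j hj j' hj' heq
    simp only [Set.mem_Iic] at hj hj'
    rcases lt_trichotomy j j' with h | h | h
    · exact absurd heq (B2fam_inj h hj')
    · exact h
    · exact absurd heq.symm (B2fam_inj h hj)
  have hAfin : ((fun s => Afam a b c p q s) '' Set.Iio p).Finite := (Set.finite_Iio p).image _
  have hEAfin : EA.Finite := hAfin.insert 0
  have hEB1fin : EB1.Finite := (Set.finite_Iic q).image _
  have hEB2fin : EB2.Finite := (Set.finite_Iic q).image _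
  have hA0 : (0 : Language α) ∉ (fun s => Afam a b c p q s) '' Set.Iio p := by
    rintro ⟨s, hs, heq⟩
    exact Afam_ne_zero (q := q) (Set.mem_Iio.1 hs) heq
  have hEAcard : EA.ncard = p + 1 := by
    rw [hEA, Set.ncard_insert_of_notMem hA0 hAfin, Set.ncard_image_of_injOn hAinj,
      ← Finset.coe_Iio, Set.ncard_coe_finset, Nat.card_Iio]
  have hEB1card : EB1.ncard = q + 1 := by
    rw [hEB1, Set.ncard_image_of_injOn hB1inj, ← Finset.coe_Iic, Set.ncard_coe_finset,
      Nat.card_Iic]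
  have hEB2card : EB2.ncard = q + 1 := by
    rw [hEB2, Set.ncard_image_of_injOn hB2inj, ← Finset.coe_Iic, Set.ncard_coe_finset,
      Nat.card_Iic]
  have hdisj2 : Disjoint EB1 EB2 := by
    rw [Set.disjoint_left]
    rintro K ⟨j, hj, rfl⟩ ⟨j', hj', heq⟩
    exact B1fam_ne_B2fam hab hac heq.symm
  have hdisj1 : Disjoint EA (EB1 ∪ EB2) := by
    rw [Set.disjoint_left]
    rintro K hK hK'
    rcases hK with rfl | ⟨s, hs, rfl⟩
    · rcases hK' with ⟨j, hj, heq⟩ | ⟨j, hj, heq⟩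
      · exact B1fam_ne_zero heq
      · exact B2fam_ne_zero (Set.mem_Iic.1 hj) heq
    · rcases hK' with ⟨j, hj, heq⟩ | ⟨j, hj, heq⟩
      · exact Afam_ne_B1fam hab hbc (Set.mem_Iio.1 hs) heq.symm
      · exact Afam_ne_B2fam hab hac (Set.mem_Iio.1 hs) heq.symm
  have hEcard : (EA ∪ (EB1 ∪ EB2)).ncard = (p + 1) + 2 * (q + 1) := by
    rw [Set.ncard_union_eq hdisj1 hEAfin (hEB1fin.union hEB2fin),
      Set.ncard_union_eq hdisj2 hEB1fin hEB2fin, hEAcard, hEB1card, hEB2card]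
    ring
  calc (p + 1) + 2 * (q + 1) = (EA ∪ (EB1 ∪ EB2)).ncard := hEcard.symm
    _ ≤ (quotientSet (chainIdeal a c p * chainIdeal b c q)).ncard :=
        Set.ncard_le_ncard hEsub hfin

end Assembly

/-- product of a right ideal with a left ideal: upper bound `m + 2n`,
and tightness by two-sided ideals over incomparable alphabets. -/
theorem two_sided_ideal_product (m n : ℕ) (hm : 5 ≤ m) (hn : 5 ≤ n) :
    (∀ (α : Type) (L' L : Language α), IsRightIdeal L' → IsLeftIdeal L →
      HasComplexity L' m → HasComplexity L n →
      (quotientSet (L' * L)).Finite ∧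
        (quotientSet (L' * L)).ncard ≤ m + 2 * n) ∧
    (∃ L' L : Language (Fin 6), IsTwoSidedIdeal L' ∧ IsTwoSidedIdeal L ∧
      (alphabetOf L' \ alphabetOf L).Nonempty ∧
      (alphabetOf L \ alphabetOf L').Nonempty ∧
      HasComplexity L' m ∧ HasComplexity L n ∧
      HasComplexity (L' * L) (m + 2 * n)) := by
  constructor
  · intro α L' L hR hLid hmC hnC
    exact part1 hR hLid hmC hnC
  · -- the witness
    have hab : (0 : Fin 6) ≠ 1 := by decide
    have hac : (0 : Fin 6) ≠ 2 := by decide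
    have hbc : (1 : Fin 6) ≠ 2 := by decide
    have hp : 0 < m - 1 := by omega
    have hq : 0 < n - 1 := by omega
    refine ⟨chainIdeal 0 2 (m - 1), chainIdeal 1 2 (n - 1),
      chainIdeal_twoSided hac hp, chainIdeal_twoSided hbc hq, ?_, ?_, ?_, ?_, ?_⟩
    · rw [alphabet_chainIdeal hac hp, alphabet_chainIdeal hbc hq]
      refine ⟨0, by simp, ?_⟩
      intro h
      rcases Set.mem_insert_iff.1 h with h | h
      · exact hab h
      · exact hac (Set.mem_singleton_iff.1 h)
    · rw [alphabet_chainIdeal hac hp, alphabet_chainIdeal hbc hq]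
      refine ⟨1, by simp, ?_⟩
      intro h
      rcases Set.mem_insert_iff.1 h with h | h
      · exact hab.symm h
      · exact hbc (Set.mem_singleton_iff.1 h)
    · have := chainIdeal_complexity (a := (0 : Fin 6)) (c := 2) hac hp
      rwa [show m - 1 + 1 = m by omega] at this
    · have := chainIdeal_complexity (a := (1 : Fin 6)) (c := 2) hbc hq
      rwa [show n - 1 + 1 = n by omega] at this
    · have := witness_product_complexity (a := (0 : Fin 6)) (b := 1) (c := 2)
        hab hac hbc hp hq
      rwa [show (m - 1 + 1) + 2 * (n - 1 + 1) = m + 2 * n by omega] at this
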